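/- Let Ω be a finite set with weights w(x) > 0 for x ∈ Ω, and for subsets S ⊆ Ω write w(S) = Σ_{x∈S} w(x). Let (X_x)_{x∈Ω} be independent random variables with X_x Exp(w(x))-distributed, and for a nonempty subset A ⊆ Ω write A* = min_{x∈A} X_x. Let A_1, …, A_d ⊆ Ω be nonempty subsets and let 1 ≤ r ≤ d. Then P( A_1* = A_2* = ⋯ = A_r* < min{A_{r+1}*, …, A_d*} ) = w( (A_1 ∩ ⋯ ∩ A_r) \ (A_{r+1} ∪ ⋯ ∪ A_d) ) / w( A_1 ∪ ⋯ ∪ A_d ), where for r = d the minimum over the empty collection is interpreted as +∞. -/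

import Mathlib

open MeasureTheory ProbabilityTheory
open scoped Classical

open Real Set
open scoped ENNReal

lemma expMeasure_Ioi' {r t : ℝ} (hr : 0 < r) (ht : 0 ≤ t) :
    expMeasure r (Set.Ioi t) = ENNReal.ofReal (Real.exp (-(r * t))) := by
  rw [show expMeasure r = volume.withDensity (gammaPDF 1 r) from rfl,
    withDensity_apply _ measurableSet_Ioi]
  have h1 : ∀ x ∈ Set.Ioi t, gammaPDF 1 r x = ENNReal.ofReal (r * Real.exp (-(r*x))) := by
    intro x hx
    have hx0 : (0:ℝ) ≤ x := le_trans ht (le_of_lt hx)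
    rw [gammaPDF_of_nonneg hx0]
    norm_num [Real.Gamma_one, Real.rpow_one]
  rw [setLIntegral_congr_fun measurableSet_Ioi h1]
  rw [← ofReal_integral_eq_lintegral_ofReal]
  · have h2 : (∫ x in Set.Ioi t, Real.exp (-(r * x))) = r⁻¹ * Real.exp (-(r*t)) := by
      have := integral_comp_mul_left_Ioi (fun x => Real.exp (-x)) t hr
      simp only [smul_eq_mul] at this
      rw [this, integral_exp_neg_Ioi]
    rw [MeasureTheory.integral_const_mul, h2]
    congr 1
    field_simp
  · have := (exp_neg_integrableOn_Ioi t hr).const_mul r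
    simpa [neg_mul] using this
  · exact Filter.Eventually.of_forall fun x => by positivity

lemma prob_all_gt {Ω : Type*} [MeasurableSpace Ω] (P : Measure Ω) [IsProbabilityMeasure P]
    {ι : Type*} [Fintype ι] (w : ι → ℝ) (hw : ∀ x, 0 < w x)
    (X : ι → Ω → ℝ) (hmeas : ∀ x, Measurable (X x))
    (hindep : iIndepFun X P)
    (hdist : ∀ x, Measure.map (X x) P = expMeasure (w x))
    {t : ℝ} (ht : 0 ≤ t) (S : Finset ι) :
    P {ω | ∀ y ∈ S, t < X y ω}
      = ENNReal.ofReal (Real.exp (-((∑ y ∈ S, w y) * t))) := by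
  have hset : {ω | ∀ y ∈ S, t < X y ω} = ⋂ y ∈ S, X y ⁻¹' Set.Ioi t := by
    ext ω; simp [Set.mem_iInter]
  rw [hset, hindep.meas_biInter (fun i _ => ⟨Set.Ioi t, measurableSet_Ioi, rfl⟩)]
  have h1 : ∀ y ∈ S, P (X y ⁻¹' Set.Ioi t) = ENNReal.ofReal (Real.exp (-(w y * t))) := by
    intro y _
    rw [← Measure.map_apply (hmeas y) measurableSet_Ioi, hdist y,
      expMeasure_Ioi' (hw y) ht]
  rw [Finset.prod_congr rfl h1, ← ENNReal.ofReal_prod_of_nonneg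
    (fun y _ => (Real.exp_pos _).le)]
  congr 1
  rw [← Real.exp_sum]
  congr 1
  rw [Finset.sum_mul]
  simp [neg_mul]

lemma prob_lt_all {Ω : Type*} [MeasurableSpace Ω] (P : Measure Ω) [IsProbabilityMeasure P]
    {ι : Type*} [Fintype ι] (w : ι → ℝ) (hw : ∀ x, 0 < w x)
    (X : ι → Ω → ℝ) (hmeas : ∀ x, Measurable (X x))
    (hindep : iIndepFun X P)
    (hdist : ∀ x, Measure.map (X x) P = expMeasure (w x))
    (x : ι) (S : Finset ι) (hxS : x ∉ S) :
    P {ω | ∀ y ∈ S, X x ω < X y ω}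
      = ENNReal.ofReal (w x / (w x + ∑ y ∈ S, w y)) := by
  set a := w x with ha
  set b := ∑ y ∈ S, w y with hb
  have hb0 : 0 ≤ b := Finset.sum_nonneg fun y _ => (hw y).le
  have hab : 0 < a + b := by linarith [hw x]
  -- the tuple of X over S
  set g : Ω → (S → ℝ) := fun ω y => X y ω with hg
  have hgS : Measurable g := measurable_pi_lambda _ fun y => hmeas y
  -- independence of X x and g
  have hXg : IndepFun (X x) g P := by
    have h1 := hindep.indepFun_finset {x} S (Finset.disjoint_singleton_left.mpr hxS) hmeas
    have h2 := h1.comp (φ := fun v : (({x} : Finset ι) : Set ι) → ℝ =>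
      v ⟨x, Finset.mem_singleton_self x⟩) (ψ := id) (measurable_pi_apply _ : Measurable (fun v : (({x} : Finset ι) : Set ι) → ℝ =>
      v ⟨x, Finset.mem_singleton_self x⟩)) measurable_id
    exact h2
  -- the event as a preimage
  set C : Set (ℝ × (S → ℝ)) := {p | ∀ y, p.1 < p.2 y} with hCdef
  have hC : MeasurableSet C := by
    have : C = ⋂ y : S, {p : ℝ × (S → ℝ) | p.1 < p.2 y} := by ext p; simp [hCdef]
    rw [this]
    exact MeasurableSet.iInter fun y =>
      measurableSet_lt measurable_fst ((measurable_pi_apply y).comp measurable_snd)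
  have hev : {ω | ∀ y ∈ S, X x ω < X y ω} = (fun ω => (X x ω, g ω)) ⁻¹' C := by
    ext ω; simp [hCdef, hg]
  haveI : IsProbabilityMeasure (P.map g) := Measure.isProbabilityMeasure_map hgS.aemeasurable
  rw [hev, ← Measure.map_apply ((hmeas x).prodMk hgS) hC,
    (indepFun_iff_map_prod_eq_prod_map_map (hmeas x).aemeasurable hgS.aemeasurable).mp hXg,
    Measure.prod_apply hC]
  have hslice : ∀ t : ℝ, 0 ≤ t →
      (P.map g) (Prod.mk t ⁻¹' C) = ENNReal.ofReal (Real.exp (-(b * t))) := by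
    intro t ht
    have hpre : Prod.mk t ⁻¹' C = {h : S → ℝ | ∀ y, t < h y} := by ext h; simp [hCdef]
    have hms : MeasurableSet {h : S → ℝ | ∀ y, t < h y} := by
      have : {h : S → ℝ | ∀ y, t < h y} = ⋂ y : S, (fun h : S → ℝ => h y) ⁻¹' Set.Ioi t := by
        ext h; simp
      rw [this]
      exact MeasurableSet.iInter fun y => (measurable_pi_apply y) measurableSet_Ioi
    rw [hpre, Measure.map_apply hgS hms]
    have : g ⁻¹' {h : S → ℝ | ∀ y, t < h y} = {ω | ∀ y ∈ S, t < X y ω} := by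
      ext ω; simp [hg]
    rw [this, prob_all_gt P w hw X hmeas hindep hdist ht S, ← hb]
  -- now integrate against expMeasure a
  rw [hdist x, ← ha]
  have hIio : expMeasure a (Set.Iio 0) = 0 := by
    rw [show expMeasure a = volume.withDensity (gammaPDF 1 a) from rfl,
      withDensity_apply _ measurableSet_Iio]
    exact lintegral_gammaPDF_of_nonpos le_rfl
  have hae0 : ∀ᵐ t ∂(expMeasure a), 0 ≤ t := by
    rw [ae_iff]
    simpa [not_le, Set.Iio] using hIio
  have hae : ∀ᵐ t ∂(expMeasure a),
      (P.map g) (Prod.mk t ⁻¹' C) = ENNReal.ofReal (Real.exp (-(b * t))) := by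
    filter_upwards [hae0] with t ht using hslice t ht
  rw [lintegral_congr_ae hae]
  -- compute ∫⁻ t, exp(-(b t)) d(expMeasure a)
  have hpdfm : Measurable (gammaPDF 1 a) := (measurable_gammaPDFReal 1 a).ennreal_ofReal
  rw [show expMeasure a = volume.withDensity (gammaPDF 1 a) from rfl]
  rw [lintegral_withDensity_eq_lintegral_mul _ hpdfm (by fun_prop)]
  have hcongr : (fun t => (gammaPDF 1 a * fun t => ENNReal.ofReal (Real.exp (-(b * t)))) t)
      =ᵐ[volume] (fun t => Set.indicator (Set.Ioi (0:ℝ))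
        (fun t => ENNReal.ofReal (a * Real.exp (-((a+b) * t)))) t) := by
    have h0 : (volume : Measure ℝ) {(0:ℝ)} = 0 := measure_singleton 0
    rw [Filter.EventuallyEq, ae_iff]
    refine measure_mono_null (fun t ht => ?_) h0
    simp only [Set.mem_setOf_eq] at ht
    by_contra hne
    apply ht
    have htne : t ≠ 0 := by simpa using hne
    rcases lt_or_gt_of_ne htne with hlt | hgt
    · simp [Pi.mul_apply, gammaPDF_of_neg hlt, Set.indicator_of_notMem
        (by simpa using hlt.le : t ∉ Set.Ioi (0:ℝ))]
    · rw [Pi.mul_apply, gammaPDF_of_nonneg hgt.le,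
        Set.indicator_of_mem (by exact hgt : t ∈ Set.Ioi (0:ℝ))]
      have ha0 : (0:ℝ) < a := hw x
      have h1 : 0 ≤ a ^ (1:ℝ) / Real.Gamma 1 * t ^ ((1:ℝ)-1) * Real.exp (-(a*t)) := by
        positivity
      rw [← ENNReal.ofReal_mul h1]
      congr 1
      rw [Real.Gamma_one, Real.rpow_one, show ((1:ℝ)-1) = 0 by norm_num, Real.rpow_zero,
        div_one, mul_one, mul_assoc, ← Real.exp_add,
        show -(a*t) + -(b*t) = -((a+b)*t) by ring]
  rw [lintegral_congr_ae hcongr, lintegral_indicator measurableSet_Ioi]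
  rw [← ofReal_integral_eq_lintegral_ofReal]
  · congr 1
    rw [MeasureTheory.integral_const_mul]
    have h2 : (∫ t in Set.Ioi (0:ℝ), Real.exp (-((a+b) * t))) = (a+b)⁻¹ * 1 := by
      have := integral_comp_mul_left_Ioi (fun u => Real.exp (-u)) 0 hab
      simp only [smul_eq_mul, mul_zero] at this
      rw [this, integral_exp_neg_Ioi]
      norm_num
    rw [h2]
    field_simp
  · have := (exp_neg_integrableOn_Ioi 0 hab).const_mul a
    simpa only [neg_mul] using this
  · exact Filter.Eventually.of_forall fun t => mul_nonneg (hw x).le (Real.exp_pos _).le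

lemma prob_ties {Ω : Type*} [MeasurableSpace Ω] (P : Measure Ω) [IsProbabilityMeasure P]
    {ι : Type*} [Fintype ι] (w : ι → ℝ)
    (X : ι → Ω → ℝ) (hmeas : ∀ x, Measurable (X x))
    (hindep : iIndepFun X P)
    (hdist : ∀ x, Measure.map (X x) P = expMeasure (w x))
    {y z : ι} (hyz : y ≠ z) :
    P {ω | X y ω = X z ω} = 0 := by
  have hXg : IndepFun (X y) (X z) P := hindep.indepFun hyz
  have hD : MeasurableSet {p : ℝ × ℝ | p.1 = p.2} :=
    measurableSet_eq_fun measurable_fst measurable_snd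
  have hev : {ω | X y ω = X z ω} = (fun ω => (X y ω, X z ω)) ⁻¹' {p : ℝ × ℝ | p.1 = p.2} := rfl
  haveI : IsProbabilityMeasure (P.map (X z)) := Measure.isProbabilityMeasure_map (hmeas z).aemeasurable
  rw [hev, ← Measure.map_apply ((hmeas y).prodMk (hmeas z)) hD,
    (indepFun_iff_map_prod_eq_prod_map_map (hmeas y).aemeasurable (hmeas z).aemeasurable).mp hXg,
    Measure.prod_apply hD]
  have h2 : ∀ t : ℝ, (P.map (X z)) {t} = 0 := by
    intro t
    rw [hdist z]
    exact (withDensity_absolutelyContinuous volume (gammaPDF 1 (w z))) (measure_singleton t)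
  have h3 : ∀ t : ℝ, (P.map (X z)) (Prod.mk t ⁻¹' {p : ℝ × ℝ | p.1 = p.2}) = 0 := by
    intro t
    have hpre : Prod.mk t ⁻¹' {p : ℝ × ℝ | p.1 = p.2} = {t} := by
      ext s; simp [eq_comm]
    rw [hpre]; exact h2 t
  simp only [h3, h2, lintegral_zero]

/-- For coordinated min-sketch cells `A_i* = min_{x ∈ A_i} X x` of nonempty
subsets `A_1, …, A_d` of a finite weighted set (with independent `X x ~ Exp(w x)`), and
`1 ≤ r ≤ d`,
`P(A_1* = ⋯ = A_r* < min {A_{r+1}*, …, A_d*})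
  = w((A_1 ∩ ⋯ ∩ A_r) \ (A_{r+1} ∪ ⋯ ∪ A_d)) / w(A_1 ∪ ⋯ ∪ A_d)`,
where for `r = d` the minimum over the empty collection is `+∞` (the condition is vacuous). -/
theorem stmt_10
    {Ω : Type*} [MeasurableSpace Ω] (P : Measure Ω) [IsProbabilityMeasure P]
    {ι : Type*} [Fintype ι]
    (w : ι → ℝ) (hw : ∀ x, 0 < w x)
    (X : ι → Ω → ℝ) (hmeas : ∀ x, Measurable (X x))
    (hindep : iIndepFun X P)
    (hdist : ∀ x, Measure.map (X x) P = expMeasure (w x))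
    (d : ℕ) (r : ℕ) (hr1 : 1 ≤ r) (hrd : r ≤ d)
    (A : Fin d → Finset ι) (hA : ∀ i, (A i).Nonempty) :
    P {ω | (∀ i : Fin d, i.val < r →
              (A i).inf' (hA i) (fun x => X x ω)
                = (A (⟨0, lt_of_lt_of_le hr1 hrd⟩ : Fin d)).inf'
                    (hA _) (fun x => X x ω)) ∧
           (∀ j : Fin d, r ≤ j.val →
              (A (⟨0, lt_of_lt_of_le hr1 hrd⟩ : Fin d)).inf'
                  (hA _) (fun x => X x ω)
                < (A j).inf' (hA j) (fun x => X x ω))}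
      = ENNReal.ofReal
          ((∑ x : ι, if (∀ i : Fin d, i.val < r → x ∈ A i) ∧
                        (∀ j : Fin d, r ≤ j.val → x ∉ A j) then w x else 0)
            / ∑ x : ι, if ∃ i : Fin d, x ∈ A i then w x else 0) := by
  set m0 : Fin d := ⟨0, lt_of_lt_of_le hr1 hrd⟩ with hm0
  have hm0r : (m0 : Fin d).val < r := hr1
  set U : Finset ι := Finset.univ.filter (fun x : ι => ∃ i : Fin d, x ∈ A i) with hU
  set I : Finset ι := Finset.univ.filter
    (fun x => (∀ i : Fin d, i.val < r → x ∈ A i) ∧ (∀ j : Fin d, r ≤ j.val → x ∉ A j)) with hI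
  have hAsub : ∀ i : Fin d, A i ⊆ U := fun i y hy =>
    Finset.mem_filter.mpr ⟨Finset.mem_univ _, ⟨i, hy⟩⟩
  have hIU : I ⊆ U := by
    intro x hx
    exact hAsub m0 ((Finset.mem_filter.mp hx).2.1 m0 hm0r)
  have hUne : U.Nonempty := by
    obtain ⟨x0, hx0⟩ := hA m0
    exact ⟨x0, hAsub m0 hx0⟩
  have hwU : 0 < ∑ y ∈ U, w y := Finset.sum_pos (fun y _ => hw y) hUne
  set E : ι → Set Ω := fun x => {ω | ∀ y ∈ U.erase x, X x ω < X y ω} with hE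
  have hEmeas : ∀ x, MeasurableSet (E x) := by
    intro x
    have h : E x = ⋂ y ∈ U.erase x, {ω | X x ω < X y ω} := by
      ext ω; simp [hE, Set.mem_iInter]
    rw [h]
    exact MeasurableSet.biInter (Finset.countable_toSet _) fun y _ =>
      measurableSet_lt (hmeas x) (hmeas y)
  set T : Set Ω := ⋃ (y : ι) (z : ι) (_ : y ≠ z), {ω | X y ω = X z ω} with hTdef
  have hT : P T = 0 := by
    refine measure_iUnion_null fun y => measure_iUnion_null fun z => ?_
    by_cases h : y = z
    · subst h; simp
    · exact measure_iUnion_null fun h' => prob_ties P w X hmeas hindep hdist h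
  have incl1 : (⋃ x ∈ I, E x) ⊆ {ω | (∀ i : Fin d, i.val < r →
              (A i).inf' (hA i) (fun x => X x ω)
                = (A m0).inf' (hA _) (fun x => X x ω)) ∧
           (∀ j : Fin d, r ≤ j.val →
              (A m0).inf' (hA _) (fun x => X x ω)
                < (A j).inf' (hA j) (fun x => X x ω))} := by
    intro ω hω
    obtain ⟨x, hxI, hωx⟩ := Set.mem_iUnion₂.mp hω
    have hx' := Finset.mem_filter.mp hxI
    have hx1 := hx'.2.1
    have hx2 := hx'.2.2
    have key : ∀ i : Fin d, i.val < r →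
        (A i).inf' (hA i) (fun y => X y ω) = X x ω := by
      intro i h
      refine le_antisymm (Finset.inf'_le _ (hx1 i h)) (Finset.le_inf' _ _ fun y hy => ?_)
      rcases eq_or_ne y x with rfl | hne
      · exact le_rfl
      · exact (hωx y (Finset.mem_erase.mpr ⟨hne, hAsub i hy⟩)).le
    constructor
    · intro i h
      rw [key i h, key m0 hm0r]
    · intro j hj
      rw [key m0 hm0r]
      refine (Finset.lt_inf'_iff _).mpr fun y hy => ?_
      have hne : y ≠ x := fun h => hx2 j hj (h ▸ hy)
      exact hωx y (Finset.mem_erase.mpr ⟨hne, hAsub j hy⟩)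
  have incl2 : {ω | (∀ i : Fin d, i.val < r →
              (A i).inf' (hA i) (fun x => X x ω)
                = (A m0).inf' (hA _) (fun x => X x ω)) ∧
           (∀ j : Fin d, r ≤ j.val →
              (A m0).inf' (hA _) (fun x => X x ω)
                < (A j).inf' (hA j) (fun x => X x ω))} ⊆ (⋃ x ∈ I, E x) ∪ T := by
    intro ω hω
    by_cases hT' : ω ∈ T
    · exact Or.inr hT'
    refine Or.inl ?_
    have hdis : ∀ y z : ι, y ≠ z → X y ω ≠ X z ω := fun y z hyz heq =>
      hT' (Set.mem_iUnion.mpr ⟨y, Set.mem_iUnion.mpr ⟨z, Set.mem_iUnion.mpr ⟨hyz, heq⟩⟩⟩)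
    obtain ⟨x, hxU, hxeq⟩ := Finset.exists_mem_eq_inf' hUne (fun y => X y ω)
    have hxmin : ∀ y ∈ U, X x ω ≤ X y ω := fun y hy => hxeq ▸ Finset.inf'_le _ hy
    have hinf_ge : ∀ i : Fin d, X x ω ≤ (A i).inf' (hA i) (fun y => X y ω) := fun i =>
      Finset.le_inf' _ _ fun y hy => hxmin y (hAsub i hy)
    obtain ⟨k, hk⟩ := (Finset.mem_filter.mp hxU).2
    have hkr : k.val < r := by
      by_contra h
      push_neg at h
      have h1 := hω.2 k h
      have h2 : (A k).inf' (hA k) (fun y => X y ω) ≤ X x ω := Finset.inf'_le _ hk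
      exact absurd (lt_of_lt_of_le h1 h2) (not_lt.mpr (hinf_ge m0))
    have hAk : (A k).inf' (hA k) (fun y => X y ω) = X x ω :=
      le_antisymm (Finset.inf'_le _ hk) (hinf_ge k)
    have hm0x : (A m0).inf' (hA m0) (fun y => X y ω) = X x ω := by
      rw [← hω.1 k hkr]; exact hAk
    have hx1 : ∀ i : Fin d, i.val < r → x ∈ A i := by
      intro i hi
      have hinf : (A i).inf' (hA i) (fun y => X y ω) = X x ω := (hω.1 i hi).trans hm0x
      obtain ⟨y, hy, hyeq⟩ := Finset.exists_mem_eq_inf' (hA i) (fun y => X y ω)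
      have hxy : X y ω = X x ω := by rw [← hyeq, hinf]
      rcases eq_or_ne y x with rfl | hne
      · exact hy
      · exact absurd hxy (hdis y x hne)
    have hx2 : ∀ j : Fin d, r ≤ j.val → x ∉ A j := by
      intro j hj hxj
      have h1 := hω.2 j hj
      have h2 : (A j).inf' (hA j) (fun y => X y ω) ≤ X x ω := Finset.inf'_le _ hxj
      rw [hm0x] at h1
      exact absurd (lt_of_lt_of_le h1 h2) (lt_irrefl _)
    refine Set.mem_iUnion₂.mpr ⟨x, Finset.mem_filter.mpr ⟨Finset.mem_univ _, hx1, hx2⟩, ?_⟩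
    intro y hy
    obtain ⟨hneyx, hyU⟩ := Finset.mem_erase.mp hy
    exact lt_of_le_of_ne (hxmin y hyU) (hdis x y (Ne.symm hneyx))
  have hdisj : (↑I : Set ι).PairwiseDisjoint E := by
    intro x hx x' hx' hne
    refine Set.disjoint_left.mpr fun ω h1 h2 => ?_
    have hx'U : x' ∈ U.erase x := Finset.mem_erase.mpr ⟨Ne.symm hne, hIU hx'⟩
    have hxU : x ∈ U.erase x' := Finset.mem_erase.mpr ⟨hne, hIU hx⟩
    exact lt_asymm (h1 x' hx'U) (h2 x hxU)
  have hPE : P {ω | (∀ i : Fin d, i.val < r →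
              (A i).inf' (hA i) (fun x => X x ω)
                = (A m0).inf' (hA _) (fun x => X x ω)) ∧
           (∀ j : Fin d, r ≤ j.val →
              (A m0).inf' (hA _) (fun x => X x ω)
                < (A j).inf' (hA j) (fun x => X x ω))} = P (⋃ x ∈ I, E x) := by
    refine le_antisymm ?_ (measure_mono incl1)
    calc P _ ≤ P ((⋃ x ∈ I, E x) ∪ T) := measure_mono incl2
      _ ≤ P (⋃ x ∈ I, E x) + P T := measure_union_le _ _
      _ = P (⋃ x ∈ I, E x) := by rw [hT, add_zero]
  rw [hPE, measure_biUnion_finset hdisj (fun x _ => hEmeas x)]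
  have hPEx : ∀ x ∈ I, P (E x) = ENNReal.ofReal (w x / ∑ y ∈ U, w y) := by
    intro x hx
    rw [hE]
    rw [prob_lt_all P w hw X hmeas hindep hdist x (U.erase x) (Finset.notMem_erase x U)]
    rw [Finset.add_sum_erase _ w (hIU hx)]
  rw [Finset.sum_congr rfl hPEx, ← ENNReal.ofReal_sum_of_nonneg
    (fun x _ => div_nonneg (hw x).le hwU.le)]
  congr 1
  rw [← Finset.sum_div]
  congr 1
  · rw [hI, Finset.sum_filter]
  · rw [hU, Finset.sum_filter]
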